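/- Let 𝔸_V=(A,V,ψ,σ) be a quadruple satisfying the twisted condition, the cocycle condition, and ∇_{A⊗V}∘σ=σ, and let A×V, p_{A⊗V}, i_{A⊗V} be the image, projection and injection of a splitting of the idempotent ∇_{A⊗V}. Then the product μ_{A×V}=p_{A⊗V}∘μ_{A⊗V}∘(i_{A⊗V}⊗i_{A⊗V}) on A×V is associative. -/

import Mathlib

open CategoryTheory MonoidalCategory

universe v u

namespace WeakCrossed

variable {C : Type u} [Category.{v} C] [MonoidalCategory C]

/-- The monoid axioms for a triple `(A, η, μ)` in a monoidal category. -/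
def IsMon (A : C) (eta : 𝟙_ C ⟶ A) (mu : A ⊗ A ⟶ A) : Prop :=
  (eta ▷ A) ≫ mu = (λ_ A).hom ∧ (A ◁ eta) ≫ mu = (ρ_ A).hom ∧
    (mu ▷ A) ≫ mu = (α_ A A A).hom ≫ (A ◁ mu) ≫ mu

/-- The morphism `(μ_A ⊗ Y) ∘ (A ⊗ f) : (A ⊗ X) ⊗ Z ⟶ A ⊗ Y` for `f : X ⊗ Z ⟶ A ⊗ Y`. -/
def phi (A : C) {X Z Y : C} (mu : A ⊗ A ⟶ A) (f : X ⊗ Z ⟶ A ⊗ Y) :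
    (A ⊗ X) ⊗ Z ⟶ A ⊗ Y :=
  (α_ A X Z).hom ≫ (A ◁ f) ≫ (α_ A A Y).inv ≫ (mu ▷ Y)

/-- The measuring condition `(μ_A ⊗ V) ∘ (A ⊗ ψ) ∘ (ψ ⊗ A) = ψ ∘ (V ⊗ μ_A)`. -/
def Measuring (A V : C) (mu : A ⊗ A ⟶ A) (psi : V ⊗ A ⟶ A ⊗ V) : Prop :=
  (psi ▷ A) ≫ phi A mu psi = (α_ V A A).hom ≫ (V ◁ mu) ≫ psi

/-- The idempotent `∇_{A⊗V} = (μ_A ⊗ V) ∘ (A ⊗ ψ) ∘ (A ⊗ V ⊗ η_A)`. -/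
def nabla (A V : C) (eta : 𝟙_ C ⟶ A) (mu : A ⊗ A ⟶ A) (psi : V ⊗ A ⟶ A ⊗ V) :
    A ⊗ V ⟶ A ⊗ V :=
  (ρ_ (A ⊗ V)).inv ≫ ((A ⊗ V) ◁ eta) ≫ phi A mu psi

/-- The twisted condition
`(μ_A ⊗ V) ∘ (A ⊗ ψ) ∘ (σ ⊗ A) = (μ_A ⊗ V) ∘ (A ⊗ σ) ∘ (ψ ⊗ V) ∘ (V ⊗ ψ)`. -/
def Twisted (A V : C) (mu : A ⊗ A ⟶ A) (psi : V ⊗ A ⟶ A ⊗ V)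
    (sig : V ⊗ V ⟶ A ⊗ V) : Prop :=
  (sig ▷ A) ≫ phi A mu psi =
    (α_ V V A).hom ≫ (V ◁ psi) ≫ (α_ V A V).inv ≫ (psi ▷ V) ≫ phi A mu sig

/-- The cocycle condition
`(μ_A ⊗ V) ∘ (A ⊗ σ) ∘ (σ ⊗ V) = (μ_A ⊗ V) ∘ (A ⊗ σ) ∘ (ψ ⊗ V) ∘ (V ⊗ σ)`. -/
def Cocycle (A V : C) (mu : A ⊗ A ⟶ A) (psi : V ⊗ A ⟶ A ⊗ V)
    (sig : V ⊗ V ⟶ A ⊗ V) : Prop :=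
  (sig ▷ V) ≫ phi A mu sig =
    (α_ V V V).hom ≫ (V ◁ sig) ≫ (α_ V A V).inv ≫ (psi ▷ V) ≫ phi A mu sig

/-- The weak crossed product multiplication
`μ_{A⊗V} = (μ_A ⊗ V) ∘ (μ_A ⊗ σ) ∘ (A ⊗ ψ ⊗ V)`. -/
def prodAV (A V : C) (mu : A ⊗ A ⟶ A) (psi : V ⊗ A ⟶ A ⊗ V)
    (sig : V ⊗ V ⟶ A ⊗ V) : (A ⊗ V) ⊗ (A ⊗ V) ⟶ A ⊗ V :=
  (α_ A V (A ⊗ V)).hom ≫ (A ◁ ((α_ V A V).inv ≫ (psi ▷ V) ≫ (α_ A V V).hom)) ≫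
    (α_ A A (V ⊗ V)).inv ≫ (mu ⊗ₘ sig) ≫ (α_ A A V).inv ≫ (mu ▷ V)

/-- The morphism `η_A ⊗ V : V ⟶ A ⊗ V`. -/
def etaT (A V : C) (eta : 𝟙_ C ⟶ A) : V ⟶ A ⊗ V := (λ_ V).inv ≫ (eta ▷ V)

/-- The morphism `β_ν = (μ_A ⊗ V) ∘ (A ⊗ ν) : A ⟶ A ⊗ V`. -/
def beta (A V : C) (mu : A ⊗ A ⟶ A) (nu : 𝟙_ C ⟶ A ⊗ V) : A ⟶ A ⊗ V :=
  (ρ_ A).inv ≫ (A ◁ nu) ≫ (α_ A A V).inv ≫ (mu ▷ V)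

/-- Preunit condition (pre1):
`(μ_A ⊗ V) ∘ (A ⊗ σ) ∘ (ψ ⊗ V) ∘ (V ⊗ ν) = ∇_{A⊗V} ∘ (η_A ⊗ V)`. -/
def Pre1 (A V : C) (eta : 𝟙_ C ⟶ A) (mu : A ⊗ A ⟶ A) (psi : V ⊗ A ⟶ A ⊗ V)
    (sig : V ⊗ V ⟶ A ⊗ V) (nu : 𝟙_ C ⟶ A ⊗ V) : Prop :=
  (ρ_ V).inv ≫ (V ◁ nu) ≫ (α_ V A V).inv ≫ (psi ▷ V) ≫ phi A mu sig =
    etaT A V eta ≫ nabla A V eta mu psi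

/-- Preunit condition (pre2):
`(μ_A ⊗ V) ∘ (A ⊗ σ) ∘ (ν ⊗ V) = ∇_{A⊗V} ∘ (η_A ⊗ V)`. -/
def Pre2 (A V : C) (eta : 𝟙_ C ⟶ A) (mu : A ⊗ A ⟶ A) (psi : V ⊗ A ⟶ A ⊗ V)
    (sig : V ⊗ V ⟶ A ⊗ V) (nu : 𝟙_ C ⟶ A ⊗ V) : Prop :=
  (λ_ V).inv ≫ (nu ▷ V) ≫ phi A mu sig = etaT A V eta ≫ nabla A V eta mu psi

/-- Preunit condition (pre3): `(μ_A ⊗ V) ∘ (A ⊗ ψ) ∘ (ν ⊗ A) = β_ν`. -/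
def Pre3 (A V : C) (mu : A ⊗ A ⟶ A) (psi : V ⊗ A ⟶ A ⊗ V)
    (nu : 𝟙_ C ⟶ A ⊗ V) : Prop :=
  (λ_ A).inv ≫ (nu ▷ A) ≫ phi A mu psi = beta A V mu nu

/-- `(A ⊗ V, μ_{A⊗V})` is a weak crossed product: measuring, twisted and cocycle
conditions hold and `∇_{A⊗V} ∘ σ = σ`. -/
def WCP (A V : C) (eta : 𝟙_ C ⟶ A) (mu : A ⊗ A ⟶ A) (psi : V ⊗ A ⟶ A ⊗ V)
    (sig : V ⊗ V ⟶ A ⊗ V) : Prop :=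
  Measuring A V mu psi ∧ Twisted A V mu psi sig ∧ Cocycle A V mu psi sig ∧
    sig ≫ nabla A V eta mu psi = sig

/-- `(A ⊗ V, μ_{A⊗V})` is a weak crossed product with preunit `ν`. -/
def WCPpre (A V : C) (eta : 𝟙_ C ⟶ A) (mu : A ⊗ A ⟶ A) (psi : V ⊗ A ⟶ A ⊗ V)
    (sig : V ⊗ V ⟶ A ⊗ V) (nu : 𝟙_ C ⟶ A ⊗ V) : Prop :=
  WCP A V eta mu psi sig ∧ Pre1 A V eta mu psi sig nu ∧
    Pre2 A V eta mu psi sig nu ∧ Pre3 A V mu psi nu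

/-- `(μ_A ⊗ Y) ∘ (A ⊗ γ) : A ⊗ X ⟶ A ⊗ Y` for `γ : X ⟶ A ⊗ Y`. -/
def tmap (A : C) {X Y : C} (mu : A ⊗ A ⟶ A) (g : X ⟶ A ⊗ Y) : A ⊗ X ⟶ A ⊗ Y :=
  (A ◁ g) ≫ (α_ A A Y).inv ≫ (mu ▷ Y)

/-- Left `A`-linearity of `T : A ⊗ X ⟶ A ⊗ Y`:
`T ∘ (μ_A ⊗ X) = (μ_A ⊗ Y) ∘ (A ⊗ T)`. -/
def LeftLin (A : C) {X Y : C} (mu : A ⊗ A ⟶ A) (T : A ⊗ X ⟶ A ⊗ Y) : Prop :=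
  (mu ▷ X) ≫ T = (α_ A A X).hom ≫ (A ◁ T) ≫ (α_ A A Y).inv ≫ (mu ▷ Y)

/-- `ν` is a preunit for the associative product `m` on `X`. -/
def IsPreunit {X : C} (m : X ⊗ X ⟶ X) (nu : 𝟙_ C ⟶ X) : Prop :=
  (ρ_ X).inv ≫ (X ◁ nu) ≫ m = (λ_ X).inv ≫ (nu ▷ X) ≫ m ∧
  (ρ_ X).inv ≫ (X ◁ nu) ≫ m =
    (ρ_ X).inv ≫ (X ◁ ((λ_ (𝟙_ C)).inv ≫ (nu ⊗ₘ nu) ≫ m)) ≫ m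

/-- Brzeziński normalization conditions: `ψ ∘ (η_V ⊗ A) = A ⊗ η_V`,
`ψ ∘ (V ⊗ η_A) = η_A ⊗ V`, `σ ∘ (η_V ⊗ V) = σ ∘ (V ⊗ η_V) = η_A ⊗ V`. -/
def BrzNorm (A V : C) (eta : 𝟙_ C ⟶ A) (etaV : 𝟙_ C ⟶ V) (psi : V ⊗ A ⟶ A ⊗ V)
    (sig : V ⊗ V ⟶ A ⊗ V) : Prop :=
  (λ_ A).inv ≫ (etaV ▷ A) ≫ psi = (ρ_ A).inv ≫ (A ◁ etaV) ∧
  (ρ_ V).inv ≫ (V ◁ eta) ≫ psi = (λ_ V).inv ≫ (eta ▷ V) ∧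
  (λ_ V).inv ≫ (etaV ▷ V) ≫ sig = (λ_ V).inv ≫ (eta ▷ V) ∧
  (ρ_ V).inv ≫ (V ◁ etaV) ≫ sig = (λ_ V).inv ≫ (eta ▷ V)


section Aux

variable {A V : C} {eta : 𝟙_ C ⟶ A} {mu : A ⊗ A ⟶ A}

lemma phi_eq {X Z Y : C} (f : X ⊗ Z ⟶ A ⊗ Y) :
    phi A mu f = (α_ A X Z).hom ≫ tmap A mu f := by
  simp [phi, tmap]

lemma whisker_tmap {X' X Y : C} (f : X' ⟶ X) (g : X ⟶ A ⊗ Y) :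
    (A ◁ f) ≫ tmap A mu g = tmap A mu (f ≫ g) := by
  simp [tmap]

lemma tmap_comp (hmu : (mu ▷ A) ≫ mu = (α_ A A A).hom ≫ (A ◁ mu) ≫ mu)
    {X Y Z : C} (g : X ⟶ A ⊗ Y) (h : Y ⟶ A ⊗ Z) :
    tmap A mu g ≫ tmap A mu h = tmap A mu (g ≫ tmap A mu h) := by
  simp only [tmap, MonoidalCategory.whiskerLeft_comp, Category.assoc]
  rw [← whisker_exchange_assoc, associator_inv_naturality_left_assoc,
    ← comp_whiskerRight, hmu]
  simp only [comp_whiskerRight, Category.assoc]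
  monoidal

lemma tmap_wr {X Y : C} (g : X ⟶ A ⊗ Y) (Z : C) :
    (tmap A mu g ▷ Z) ≫ (α_ A Y Z).hom =
    (α_ A X Z).hom ≫ tmap A mu ((g ▷ Z) ≫ (α_ A Y Z).hom) := by
  simp only [tmap, comp_whiskerRight, Category.assoc, MonoidalCategory.whiskerLeft_comp]
  monoidal

lemma tmap_wr_tmap (hmu : (mu ▷ A) ≫ mu = (α_ A A A).hom ≫ (A ◁ mu) ≫ mu)
    {X Y Z W : C} (s : X ⟶ A ⊗ Y) (t : Y ⊗ Z ⟶ A ⊗ W) :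
    (tmap A mu s ▷ Z) ≫ (α_ A Y Z).hom ≫ tmap A mu t =
    (α_ A X Z).hom ≫ tmap A mu ((s ▷ Z) ≫ (α_ A Y Z).hom ≫ tmap A mu t) := by
  rw [← Category.assoc, tmap_wr, Category.assoc, tmap_comp hmu]
  simp only [Category.assoc]

/-- `qq` is the morphism `q : V ⊗ (A ⊗ V) ⟶ A ⊗ V` underlying the crossed product. -/
def qq {A V : C} (mu : A ⊗ A ⟶ A) (psi : V ⊗ A ⟶ A ⊗ V) (sig : V ⊗ V ⟶ A ⊗ V) :
    V ⊗ (A ⊗ V) ⟶ A ⊗ V :=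
  (α_ V A V).inv ≫ (psi ▷ V) ≫ phi A mu sig

variable {psi : V ⊗ A ⟶ A ⊗ V} {sig : V ⊗ V ⟶ A ⊗ V}

lemma nabla_tmap : nabla A V eta mu psi = tmap A mu ((ρ_ V).inv ≫ (V ◁ eta) ≫ psi) := by
  simp only [nabla, phi, tmap, MonoidalCategory.whiskerLeft_comp, Category.assoc]
  monoidal

lemma prodAV_tmap (hmu : (mu ▷ A) ≫ mu = (α_ A A A).hom ≫ (A ◁ mu) ≫ mu) :
    prodAV A V mu psi sig = (α_ A V (A ⊗ V)).hom ≫ tmap A mu (qq mu psi sig) := by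
  simp only [prodAV, qq, phi, tmap, MonoidalCategory.tensorHom_def,
    MonoidalCategory.whiskerLeft_comp, Category.assoc]
  rw [← whisker_exchange_assoc, associator_inv_naturality_left_assoc,
    ← comp_whiskerRight, hmu]
  simp only [comp_whiskerRight, Category.assoc]
  monoidal

lemma qq_def : qq mu psi sig = (α_ V A V).inv ≫ (psi ▷ V) ≫ phi A mu sig := rfl

lemma qq_fact : qq mu psi sig =
    ((α_ V A V).inv ≫ (psi ▷ V) ≫ (α_ A V V).hom ≫ (A ◁ sig) ≫ (α_ A A V).inv) ≫
      (mu ▷ V) := by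
  simp [qq, phi]

lemma phi_wr_phi (hmu : (mu ▷ A) ≫ mu = (α_ A A A).hom ≫ (A ◁ mu) ≫ mu)
    {X Z Y U W' : C} (f : X ⊗ Z ⟶ A ⊗ Y) (t : Y ⊗ U ⟶ A ⊗ W') :
    ((phi A mu f) ▷ U) ≫ phi A mu t =
    ((α_ A X Z).hom ▷ U) ≫ (α_ A (X ⊗ Z) U).hom ≫
      tmap A mu ((f ▷ U) ≫ phi A mu t) := by
  rw [phi_eq f, phi_eq t, comp_whiskerRight, Category.assoc, tmap_wr_tmap hmu, ← phi_eq]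

lemma whisker_prodAV (hmu : (mu ▷ A) ≫ mu = (α_ A A A).hom ≫ (A ◁ mu) ≫ mu)
    {W : C} (g : W ⟶ A ⊗ V) :
    (g ▷ (A ⊗ V)) ≫ prodAV A V mu psi sig =
    (α_ W A V).inv ≫ (((g ▷ A) ≫ phi A mu psi) ▷ V) ≫ phi A mu sig := by
  rw [prodAV_tmap hmu, comp_whiskerRight, Category.assoc, phi_wr_phi hmu psi sig,
    qq_def, ← whisker_tmap]
  have h : (g ▷ (A ⊗ V)) ≫ (α_ A V (A ⊗ V)).hom ≫ (A ◁ (α_ V A V).inv) =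
      (α_ W A V).inv ≫ ((g ▷ A) ▷ V) ≫ ((α_ A V A).hom ▷ V) ≫
        (α_ A (V ⊗ A) V).hom := by monoidal
  rw [reassoc_of% h]

lemma mul_pull (hmu : (mu ▷ A) ≫ mu = (α_ A A A).hom ≫ (A ◁ mu) ≫ mu)
    (hpsi : Measuring A V mu psi) {X : C} (f : X ⟶ (A ⊗ A) ⊗ V) :
    (V ◁ (f ≫ (mu ▷ V))) ≫ qq mu psi sig =
    (V ◁ f) ≫
      (α_ V (A ⊗ A) V).inv ≫ ((α_ V A A).inv ▷ V) ≫ ((psi ▷ A) ▷ V) ≫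
      ((α_ A V A).hom ▷ V) ≫ (α_ A (V ⊗ A) V).hom ≫ (A ◁ (α_ V A V).hom) ≫
      tmap A mu (qq mu psi sig) := by
  have hq1 : (psi ▷ V) ≫ phi A mu sig = (α_ V A V).hom ≫ qq mu psi sig := by
    rw [qq_def, Iso.hom_inv_id_assoc]
  have hpsi' : (V ◁ mu) ≫ psi = (α_ V A A).inv ≫ (psi ▷ A) ≫ phi A mu psi := by
    unfold Measuring at hpsi
    rw [hpsi, Iso.inv_hom_id_assoc]
  have hnat : (V ◁ (mu ▷ V)) ≫ (α_ V A V).inv =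
      (α_ V (A ⊗ A) V).inv ≫ ((V ◁ mu) ▷ V) := by monoidal
  rw [MonoidalCategory.whiskerLeft_comp, Category.assoc, qq_def, reassoc_of% hnat,
    ← comp_whiskerRight_assoc, hpsi']
  simp only [comp_whiskerRight, Category.assoc]
  rw [phi_wr_phi hmu psi sig, hq1, ← whisker_tmap]
  simp only [Iso.inv_hom_id_assoc]

lemma measuring_pull (hmu : (mu ▷ A) ≫ mu = (α_ A A A).hom ≫ (A ◁ mu) ≫ mu)
    (hpsi : Measuring A V mu psi) :
    (V ◁ qq mu psi sig) ≫ qq mu psi sig =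
    (V ◁ ((α_ V A V).inv ≫ (psi ▷ V) ≫ (α_ A V V).hom ≫ (A ◁ sig) ≫ (α_ A A V).inv)) ≫
      (α_ V (A ⊗ A) V).inv ≫ ((α_ V A A).inv ▷ V) ≫ ((psi ▷ A) ▷ V) ≫
      ((α_ A V A).hom ▷ V) ≫ (α_ A (V ⊗ A) V).hom ≫ (A ◁ (α_ V A V).hom) ≫
      tmap A mu (qq mu psi sig) := by
  rw [show V ◁ qq mu psi sig = V ◁ (((α_ V A V).inv ≫ (psi ▷ V) ≫ (α_ A V V).hom ≫
      (A ◁ sig) ≫ (α_ A A V).inv) ≫ (mu ▷ V)) from by rw [← qq_fact]]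
  rw [mul_pull hmu hpsi]

lemma core :
    (α_ (V ⊗ V) A V).inv ≫ ((α_ V V A).hom ▷ V) ≫ ((V ◁ psi) ▷ V) ≫ ((α_ V A V).inv ▷ V) ≫
      ((psi ▷ V) ▷ V) ≫ ((α_ A V V).hom ▷ V) ≫ (α_ A (V ⊗ V) V).hom ≫
      (A ◁ (α_ V V V).hom) ≫ (A ◁ (V ◁ sig)) =
    (α_ V V (A ⊗ V)).hom ≫
      (V ◁ ((α_ V A V).inv ≫ (psi ▷ V) ≫ (α_ A V V).hom ≫ (A ◁ sig) ≫ (α_ A A V).inv)) ≫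
      (α_ V (A ⊗ A) V).inv ≫ ((α_ V A A).inv ▷ V) ≫ ((psi ▷ A) ▷ V) ≫
      ((α_ A V A).hom ▷ V) ≫ (α_ A (V ⊗ A) V).hom ≫ (A ◁ (α_ V A V).hom) := by
  calc _ = ((α_ V V (A ⊗ V)).hom ≫ (V ◁ (α_ V A V).inv) ≫ (V ◁ (psi ▷ V)) ≫
        (V ◁ (α_ A V V).hom) ≫ (α_ V A (V ⊗ V)).inv) ≫
        (psi ▷ (V ⊗ V)) ≫ ((A ⊗ V) ◁ sig) ≫ (α_ A V (A ⊗ V)).hom := by monoidal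
    _ = ((α_ V V (A ⊗ V)).hom ≫ (V ◁ (α_ V A V).inv) ≫ (V ◁ (psi ▷ V)) ≫
        (V ◁ (α_ A V V).hom) ≫ (α_ V A (V ⊗ V)).inv) ≫
        ((V ⊗ A) ◁ sig) ≫ (psi ▷ (A ⊗ V)) ≫ (α_ A V (A ⊗ V)).hom := by
        simp only [Category.assoc]
        rw [← whisker_exchange_assoc]
    _ = _ := by monoidal

lemma star (hmu : (mu ▷ A) ≫ mu = (α_ A A A).hom ≫ (A ◁ mu) ≫ mu)
    (hpsi : Measuring A V mu psi) (htw : Twisted A V mu psi sig)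
    (hco : Cocycle A V mu psi sig) :
    (sig ▷ (A ⊗ V)) ≫ prodAV A V mu psi sig =
    (α_ V V (A ⊗ V)).hom ≫ (V ◁ qq mu psi sig) ≫ qq mu psi sig := by
  have htw' : (sig ▷ A) ≫ phi A mu psi =
      (α_ V V A).hom ≫ (V ◁ psi) ≫ qq mu psi sig := by
    unfold Twisted at htw; rw [htw, ← qq_def]
  have hco' : (sig ▷ V) ≫ phi A mu sig =
      (α_ V V V).hom ≫ (V ◁ sig) ≫ qq mu psi sig := by
    unfold Cocycle at hco; rw [hco, ← qq_def]
  conv_rhs => rw [measuring_pull hmu hpsi]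
  conv_lhs => rw [whisker_prodAV hmu sig, htw']
  conv_lhs => simp only [comp_whiskerRight, Category.assoc]
  conv_lhs => rw [show qq mu psi sig ▷ V = ((α_ V A V).inv ▷ V) ≫ ((psi ▷ V) ▷ V) ≫
      (phi A mu sig ▷ V) from by rw [qq_def, comp_whiskerRight, comp_whiskerRight]]
  conv_lhs => simp only [Category.assoc]
  conv_lhs => rw [phi_wr_phi hmu sig sig, hco', ← whisker_tmap, ← whisker_tmap]
  try simp only [Category.assoc]
  rw [reassoc_of% (core (psi := psi) (sig := sig))]

lemma prodAV_phi (hmu : (mu ▷ A) ≫ mu = (α_ A A A).hom ≫ (A ◁ mu) ≫ mu) :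
    prodAV A V mu psi sig = phi A mu (qq mu psi sig) := by
  rw [prodAV_tmap hmu, phi_eq]

lemma prodAV_fact (hmu : (mu ▷ A) ≫ mu = (α_ A A A).hom ≫ (A ◁ mu) ≫ mu) :
    prodAV A V mu psi sig =
      ((α_ A V (A ⊗ V)).hom ≫ (A ◁ qq mu psi sig) ≫ (α_ A A V).inv) ≫ (mu ▷ V) := by
  rw [prodAV_phi hmu]
  simp [phi]

lemma core2 :
    ((α_ V A V).inv ▷ (A ⊗ V)) ≫ ((psi ▷ V) ▷ (A ⊗ V)) ≫ ((α_ A V V).hom ▷ (A ⊗ V)) ≫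
      (α_ A (V ⊗ V) (A ⊗ V)).hom ≫ (A ◁ (α_ V V (A ⊗ V)).hom) ≫
      (A ◁ (V ◁ qq mu psi sig)) =
    (α_ V (A ⊗ V) (A ⊗ V)).hom ≫
      (V ◁ ((α_ A V (A ⊗ V)).hom ≫ (A ◁ qq mu psi sig) ≫ (α_ A A V).inv)) ≫
      (α_ V (A ⊗ A) V).inv ≫ ((α_ V A A).inv ▷ V) ≫ ((psi ▷ A) ▷ V) ≫
      ((α_ A V A).hom ▷ V) ≫ (α_ A (V ⊗ A) V).hom ≫ (A ◁ (α_ V A V).hom) := by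
  calc _ = ((α_ V (A ⊗ V) (A ⊗ V)).hom ≫ (V ◁ (α_ A V (A ⊗ V)).hom) ≫
        (α_ V A (V ⊗ (A ⊗ V))).inv) ≫
        (psi ▷ (V ⊗ (A ⊗ V))) ≫ ((A ⊗ V) ◁ qq mu psi sig) ≫
        (α_ A V (A ⊗ V)).hom := by monoidal
    _ = ((α_ V (A ⊗ V) (A ⊗ V)).hom ≫ (V ◁ (α_ A V (A ⊗ V)).hom) ≫
        (α_ V A (V ⊗ (A ⊗ V))).inv) ≫
        ((V ⊗ A) ◁ qq mu psi sig) ≫ (psi ▷ (A ⊗ V)) ≫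
        (α_ A V (A ⊗ V)).hom := by
        simp only [Category.assoc]
        rw [← whisker_exchange_assoc]
    _ = _ := by monoidal

lemma key (hmu : (mu ▷ A) ≫ mu = (α_ A A A).hom ≫ (A ◁ mu) ≫ mu)
    (hpsi : Measuring A V mu psi) (htw : Twisted A V mu psi sig)
    (hco : Cocycle A V mu psi sig) :
    (qq mu psi sig ▷ (A ⊗ V)) ≫ prodAV A V mu psi sig =
    (α_ V (A ⊗ V) (A ⊗ V)).hom ≫ (V ◁ prodAV A V mu psi sig) ≫ qq mu psi sig := by
  conv_lhs => rw [show qq mu psi sig ▷ (A ⊗ V) = ((α_ V A V).inv ▷ (A ⊗ V)) ≫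
      ((psi ▷ V) ▷ (A ⊗ V)) ≫ (phi A mu sig ▷ (A ⊗ V)) from by
        rw [qq_def, comp_whiskerRight, comp_whiskerRight]]
  conv_lhs => simp only [Category.assoc]
  conv_lhs => rw [prodAV_phi hmu, phi_wr_phi hmu sig (qq mu psi sig), ← prodAV_phi hmu,
    star hmu hpsi htw hco, ← whisker_tmap, ← whisker_tmap]
  conv_rhs => rw [show V ◁ prodAV A V mu psi sig = V ◁ (((α_ A V (A ⊗ V)).hom ≫
      (A ◁ qq mu psi sig) ≫ (α_ A A V).inv) ≫ (mu ▷ V)) from by rw [← prodAV_fact hmu]]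
  conv_rhs => rw [mul_pull hmu hpsi]
  try simp only [Category.assoc]
  rw [reassoc_of% (core2 (psi := psi) (sig := sig))]

lemma prod_assoc (hmu : (mu ▷ A) ≫ mu = (α_ A A A).hom ≫ (A ◁ mu) ≫ mu)
    (hpsi : Measuring A V mu psi) (htw : Twisted A V mu psi sig)
    (hco : Cocycle A V mu psi sig) :
    (prodAV A V mu psi sig ▷ (A ⊗ V)) ≫ prodAV A V mu psi sig =
    (α_ (A ⊗ V) (A ⊗ V) (A ⊗ V)).hom ≫ ((A ⊗ V) ◁ prodAV A V mu psi sig) ≫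
      prodAV A V mu psi sig := by
  conv_lhs => rw [prodAV_tmap hmu]
  conv_lhs => rw [comp_whiskerRight]
  conv_lhs => simp only [Category.assoc]
  conv_lhs => rw [tmap_wr_tmap hmu (qq mu psi sig) (qq mu psi sig),
    ← prodAV_tmap hmu, key hmu hpsi htw hco, ← whisker_tmap, ← whisker_tmap]
  conv_lhs => rw [prodAV_tmap hmu]
  conv_rhs => rw [prodAV_tmap hmu]
  monoidal

lemma prod_nabla (hmu : (mu ▷ A) ≫ mu = (α_ A A A).hom ≫ (A ◁ mu) ≫ mu)
    (hsig : sig ≫ nabla A V eta mu psi = sig) :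
    prodAV A V mu psi sig ≫ nabla A V eta mu psi = prodAV A V mu psi sig := by
  have h2 : phi A mu sig ≫ nabla A V eta mu psi = phi A mu sig := by
    rw [phi_eq, nabla_tmap, Category.assoc, tmap_comp hmu, ← nabla_tmap, hsig, ← phi_eq]
  have h3 : qq mu psi sig ≫ nabla A V eta mu psi = qq mu psi sig := by
    rw [qq_def]
    simp only [Category.assoc]
    rw [h2]
  rw [prodAV_tmap hmu, Category.assoc, nabla_tmap, tmap_comp hmu, ← nabla_tmap, h3]

end Aux

/-- the restricted product on the image `A × V` of `∇_{A⊗V}` is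
associative. -/
theorem restricted_product_assoc (A V : C) (eta : 𝟙_ C ⟶ A) (mu : A ⊗ A ⟶ A)
    (hA : IsMon A eta mu) (psi : V ⊗ A ⟶ A ⊗ V) (hpsi : Measuring A V mu psi)
    (sig : V ⊗ V ⟶ A ⊗ V) (htw : Twisted A V mu psi sig)
    (hco : Cocycle A V mu psi sig) (hsig : sig ≫ nabla A V eta mu psi = sig)
    (P : C) (p : A ⊗ V ⟶ P) (i : P ⟶ A ⊗ V)
    (hpi : p ≫ i = nabla A V eta mu psi) (hip : i ≫ p = 𝟙 P) :
    (((i ⊗ₘ i) ≫ prodAV A V mu psi sig ≫ p) ▷ P) ≫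
        ((i ⊗ₘ i) ≫ prodAV A V mu psi sig ≫ p) =
      (α_ P P P).hom ≫ (P ◁ ((i ⊗ₘ i) ≫ prodAV A V mu psi sig ≫ p)) ≫
        ((i ⊗ₘ i) ≫ prodAV A V mu psi sig ≫ p) := by
  have hmu : (mu ▷ A) ≫ mu = (α_ A A A).hom ≫ (A ◁ mu) ≫ mu := hA.2.2
  have hB := prod_nabla hmu hsig
  have hAs := prod_assoc hmu hpsi htw hco
  have comp1 : (i ⊗ₘ i) ≫ prodAV A V mu psi sig ≫ p ≫ i =
      (i ⊗ₘ i) ≫ prodAV A V mu psi sig := by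
    rw [hpi, hB]
  have e1 : (((i ⊗ₘ i) ≫ prodAV A V mu psi sig ≫ p) ▷ P) ≫ (i ⊗ₘ i)
      = ((i ⊗ₘ i) ⊗ₘ i) ≫ (prodAV A V mu psi sig ▷ (A ⊗ V)) := by
    simp only [← tensorHom_id, MonoidalCategory.tensorHom_comp_tensorHom, Category.id_comp, Category.comp_id,
      Category.assoc, comp1]
  have e2 : (P ◁ ((i ⊗ₘ i) ≫ prodAV A V mu psi sig ≫ p)) ≫ (i ⊗ₘ i)
      = (i ⊗ₘ (i ⊗ₘ i)) ≫ ((A ⊗ V) ◁ prodAV A V mu psi sig) := by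
    simp only [← id_tensorHom, MonoidalCategory.tensorHom_comp_tensorHom, Category.id_comp, Category.comp_id,
      Category.assoc, comp1]
  rw [reassoc_of% e1, reassoc_of% e2, reassoc_of% hAs, associator_naturality_assoc i i i]

end WeakCrossed
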